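/- Let f be a natural number, a ≤ b real numbers, S a finite multiset of real numbers, and T a sub-multiset of S with card S − card T ≤ f such that every element of T lies in the closed interval [a, b]. Let v be a real number with a ≤ v ≤ b, and suppose at least f+1 elements of S (counted with multiplicity) are ≥ v. Let S' be the multiset obtained from S by removing the f largest elements of S and additionally removing every element that is among the f smallest elements of S and is strictly less than v. Then every element of S' lies in [a, b], and the average (v + Σ_{w ∈ S'} w) / (card S' + 1) lies in [a, b]. -/

import Mathlib

/-- The paper's asymmetric reducing procedure (case where at least `f+1` gathered values
are `≥ v`): from the ascending sorted list of `S`, remove the last `min f (card S)`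
entries (the `f` largest elements), and among the first `min f (card S)` entries of the
sorted list of `S` (the `f` smallest elements) additionally remove those that are
strictly less than `v`. -/
noncomputable def Multiset.reduceUp (S : Multiset ℝ) (f : ℕ) (v : ℝ) : Multiset ℝ :=
  let L := S.sort (· ≤ ·)
  let L' := L.take (L.length - f)
  (((L'.take f).filter (fun x => v ≤ x) ++ L'.drop f : List ℝ) : Multiset ℝ)

lemma aux_filter_card_le {S T : Multiset ℝ} (hTS : T ≤ S) {f : ℕ}
    (hf : S.card - T.card ≤ f) (p : ℝ → Prop) [DecidablePred p]
    (hT : ∀ x ∈ T, ¬ p x) : (S.filter p).card ≤ f := by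
  obtain ⟨U, rfl⟩ := Multiset.le_iff_exists_add.mp hTS
  rw [Multiset.filter_add, Multiset.card_add, Multiset.filter_eq_nil.mpr hT,
    Multiset.card_zero]
  have := Multiset.card_le_card (Multiset.filter_le p U)
  simp [Multiset.card_add] at hf
  omega

lemma aux_mem_reduceUp {S : Multiset ℝ} {f : ℕ} {v w : ℝ} (h : w ∈ S.reduceUp f v) :
    ∃ i : ℕ, ∃ hi : i < (S.sort (· ≤ ·)).length,
      (S.sort (· ≤ ·))[i] = w ∧ i + f < (S.sort (· ≤ ·)).length ∧ (v ≤ w ∨ f ≤ i) := by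
  unfold Multiset.reduceUp at h
  rw [Multiset.mem_coe, List.mem_append] at h
  rcases h with h | h
  · rw [List.mem_filter] at h
    obtain ⟨hmem, hvw⟩ := h
    have hmem' := List.mem_of_mem_take hmem
    obtain ⟨i, hi, hw⟩ := List.mem_iff_getElem.mp hmem'
    simp only [List.length_take, lt_min_iff, Nat.lt_min] at hi
    rw [List.getElem_take] at hw
    refine ⟨i, by omega, hw, by omega, Or.inl (of_decide_eq_true hvw)⟩
  · obtain ⟨j, hj, hw⟩ := List.mem_iff_getElem.mp h
    simp only [List.length_drop, List.length_take] at hj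
    rw [List.getElem_drop, List.getElem_take] at hw
    exact ⟨f + j, by omega, hw, by omega, Or.inr (by omega)⟩

lemma aux_count_upper {L : List ℝ} (hL : L.Pairwise (· ≤ ·)) {i f : ℕ}
    (hi : i < L.length) (h : i + f < L.length) {w : ℝ} (hw : L[i] = w) :
    f + 1 ≤ L.countP (fun x => decide (w ≤ x)) := by
  have key : L.countP (fun x => decide (w ≤ x)) =
      (L.take i).countP (fun x => decide (w ≤ x))
      + (L.drop i).countP (fun x => decide (w ≤ x)) := by
    conv_lhs => rw [← List.take_append_drop i L]
    rw [List.countP_append]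
  have hdrop : (L.drop i).countP (fun x => decide (w ≤ x)) = (L.drop i).length := by
    rw [List.countP_eq_length]
    intro x hx
    obtain ⟨j, hj, rfl⟩ := List.mem_iff_getElem.mp hx
    rw [List.getElem_drop]
    simp only [decide_eq_true_eq]
    rw [← hw]
    exact hL.rel_get_of_le (a := ⟨i, hi⟩)
      (b := ⟨i + j, by rw [List.length_drop] at hj; omega⟩) (by simp)
  rw [key, hdrop, List.length_drop]
  omega

lemma aux_count_lower {L : List ℝ} (hL : L.Pairwise (· ≤ ·)) {i f : ℕ}
    (hi : i < L.length) (h : f ≤ i) {w : ℝ} (hw : L[i] = w) :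
    f + 1 ≤ L.countP (fun x => decide (x ≤ w)) := by
  have key : L.countP (fun x => decide (x ≤ w)) =
      (L.take (i + 1)).countP (fun x => decide (x ≤ w))
      + (L.drop (i + 1)).countP (fun x => decide (x ≤ w)) := by
    conv_lhs => rw [← List.take_append_drop (i + 1) L]
    rw [List.countP_append]
  have htake : (L.take (i + 1)).countP (fun x => decide (x ≤ w)) = (L.take (i + 1)).length := by
    rw [List.countP_eq_length]
    intro x hx
    obtain ⟨j, hj, rfl⟩ := List.mem_iff_getElem.mp hx
    rw [List.length_take] at hj
    rw [List.getElem_take]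
    simp only [decide_eq_true_eq]
    rw [← hw]
    exact hL.rel_get_of_le (a := ⟨j, by omega⟩) (b := ⟨i, hi⟩) (by simp; omega)
  rw [key, htake, List.length_take]
  omega


/-- validity of the asymmetric reduce-and-average step, in the case where
at least `f+1` elements of `S` are `≥ v`. -/
theorem stmt_3 (f : ℕ) (a b : ℝ) (hab : a ≤ b) (S T : Multiset ℝ)
    (hTS : T ≤ S) (hf : S.card - T.card ≤ f)
    (hT : ∀ x ∈ T, x ∈ Set.Icc a b) (v : ℝ) (hv : a ≤ v) (hv' : v ≤ b)
    (hquorum : f + 1 ≤ (S.filter (fun x => v ≤ x)).card) :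
    (∀ w ∈ S.reduceUp f v, w ∈ Set.Icc a b) ∧
    (v + (S.reduceUp f v).sum) / ((S.reduceUp f v).card + 1) ∈ Set.Icc a b := by
  have hLs : (S.sort (· ≤ ·)).Pairwise (· ≤ ·) := S.pairwise_sort _
  have hSL : ((S.sort (· ≤ ·)) : Multiset ℝ) = S := S.sort_eq _
  have hcountP : ∀ (p : ℝ → Prop) [DecidablePred p],
      (S.sort (· ≤ ·)).countP (fun x => decide (p x)) = (S.filter p).card := by
    intro p _
    conv_rhs => rw [← hSL]
    rw [Multiset.filter_coe, Multiset.coe_card, List.countP_eq_length_filter]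
  have hIcc : ∀ w ∈ S.reduceUp f v, w ∈ Set.Icc a b := by
    intro w hw
    obtain ⟨i, hi, hwi, hif, hcase⟩ := aux_mem_reduceUp hw
    have hub : w ≤ b := by
      by_contra hb
      push_neg at hb
      have h1 := aux_count_upper hLs hi hif hwi
      rw [hcountP (fun x => w ≤ x)] at h1
      have h2 : S.filter (fun x => w ≤ x) ≤ S.filter (fun x => b < x) :=
        Multiset.monotone_filter_right S (fun x hx => lt_of_lt_of_le hb hx)
      have h3 : (S.filter (fun x => b < x)).card ≤ f :=
        aux_filter_card_le hTS hf _ (fun x hx => not_lt.mpr (hT x hx).2)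
      have h4 := Multiset.card_le_card h2
      omega
    have hlb : a ≤ w := by
      rcases hcase with hvw | hfi
      · exact le_trans hv hvw
      · by_contra ha
        push_neg at ha
        have h1 := aux_count_lower hLs hi hfi hwi
        rw [hcountP (fun x => x ≤ w)] at h1
        have h2 : S.filter (fun x => x ≤ w) ≤ S.filter (fun x => x < a) :=
          Multiset.monotone_filter_right S (fun x hx => lt_of_le_of_lt hx ha)
        have h3 : (S.filter (fun x => x < a)).card ≤ f :=
          aux_filter_card_le hTS hf _ (fun x hx => not_lt.mpr (hT x hx).1)
        have h4 := Multiset.card_le_card h2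
        omega
    exact ⟨hlb, hub⟩
  refine ⟨hIcc, ?_⟩
  set R := S.reduceUp f v
  have hsum_ub : R.sum ≤ R.card • b := Multiset.sum_le_card_nsmul R b (fun x hx => (hIcc x hx).2)
  have hsum_lb : R.card • a ≤ R.sum := Multiset.card_nsmul_le_sum (fun x hx => (hIcc x hx).1)
  rw [nsmul_eq_mul] at hsum_ub hsum_lb
  have hm : (0 : ℝ) < (R.card : ℝ) + 1 := by positivity
  constructor
  · rw [le_div_iff₀ hm]; nlinarith
  · rw [div_le_iff₀ hm]; nlinarith
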